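/- In a self-similar graph, for a vertex v in F, the number of cells containing v in their boundary times (θ_X − 1) equals the degree of v in the reduced graph X_F; consequently c_X·(θ_X − 1) = M_X, where c_X is the supremum of cell counts over boundary vertices and M_X the supremum of degrees. -/

import Mathlib

variable {V : Type*}

/-- `C` is a cell w.r.t. `F`: a connected component of `V X ∖ F`. -/
def IsCellOf (G : SimpleGraph V) (F : Set V) (C : Set V) : Prop :=
  C.Nonempty ∧ C ⊆ Fᶜ ∧ (G.induce C).Preconnected ∧
    ∀ D : Set V, C ⊆ D → D ⊆ Fᶜ → (G.induce D).Preconnected → D = C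

/-- vertex boundary θC -/
def vBoundary (G : SimpleGraph V) (C : Set V) : Set V :=
  {v | v ∉ C ∧ ∃ c ∈ C, G.Adj v c}

/-- closure of a set of vertices -/
def vClosure (G : SimpleGraph V) (C : Set V) : Set V := C ∪ vBoundary G C

/-- edge boundary δC -/
def eBoundary (G : SimpleGraph V) (C : Set V) : Set (Sym2 V) :=
  {e | ∃ x y, G.Adj x y ∧ e = s(x, y) ∧ x ∈ C ∧ y ∉ C}

/-- edges of the cell graph Ĉ (subgraph spanned by the closure of C) -/
def cellEdges (G : SimpleGraph V) (C : Set V) : Set (Sym2 V) :=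
  {e | ∃ x y, G.Adj x y ∧ e = s(x, y) ∧ x ∈ vClosure G C ∧ y ∈ vClosure G C}

/-- the reduced graph X_F -/
def reducedGraph (G : SimpleGraph V) (F : Set V) : SimpleGraph F where
  Adj x y := x ≠ y ∧ ∃ C : Set V, IsCellOf G F C ∧
    (x : V) ∈ vBoundary G C ∧ (y : V) ∈ vBoundary G C
  symm := ⟨by
    rintro x y ⟨hxy, C, hC, hx, hy⟩
    exact ⟨hxy.symm, C, hC, hy, hx⟩⟩
  loopless := ⟨by rintro x ⟨hx, -⟩; exact hx rfl⟩

/-- F^n = ψ^n (V X), as a subset of V -/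
def Fpow (G : SimpleGraph V) (F : Set V) (ψ : G ≃g reducedGraph G F) : ℕ → Set V
  | 0 => Set.univ
  | n + 1 => (fun v => ((ψ v : F) : V)) '' Fpow G F ψ n

/-- (F1) no two vertices of F adjacent -/
def AxiomF1 (G : SimpleGraph V) (F : Set V) : Prop :=
  ∀ x ∈ F, ∀ y ∈ F, ¬ G.Adj x y

/-- (F2) closures of distinct cells share at most one vertex -/
def AxiomF2 (G : SimpleGraph V) (F : Set V) : Prop :=
  ∀ C D : Set V, IsCellOf G F C → IsCellOf G F D → C ≠ D →
    (vClosure G C ∩ vClosure G D).Subsingleton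

/-- (H1) cell graphs finite, pairwise isomorphic via boundary preserving isomorphisms -/
def AxiomH1 (G : SimpleGraph V) (F : Set V) : Prop :=
  (∀ C : Set V, IsCellOf G F C → (vClosure G C).Finite) ∧
  ∀ C D : Set V, IsCellOf G F C → IsCellOf G F D →
    ∃ α : G.induce (vClosure G C) ≃g G.induce (vClosure G D),
      ∀ x : vClosure G C, (x : V) ∈ vBoundary G C → ((α x : vClosure G D) : V) ∈ vBoundary G D

/-- (H2) any two distinct boundary vertices of a cell are at distance ν -/
def AxiomH2 (G : SimpleGraph V) (F : Set V) (ν : ℕ) : Prop :=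
  ∀ C : Set V, IsCellOf G F C → ∀ x ∈ vBoundary G C, ∀ y ∈ vBoundary G C,
    x ≠ y → G.dist x y = ν

/-- constant inner degree `b` : every boundary vertex of every cell has degree b in the cell graph -/
def ConstInnerDegree (G : SimpleGraph V) (F : Set V) (b : ℕ) : Prop :=
  ∀ C : Set V, IsCellOf G F C → ∀ v ∈ vBoundary G C,
    {u ∈ vClosure G C | G.Adj v u}.ncard = b

/-- bounded geometry: vertex degrees uniformly bounded -/
def BoundedGeometry (G : SimpleGraph V) : Prop :=
  ∃ M : ℕ, ∀ v : V, (G.neighborSet v).Finite ∧ (G.neighborSet v).ncard ≤ M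

/-- volume of a set of vertices -/
noncomputable def volOf (G : SimpleGraph V) (A : Set V) : ℕ :=
  ∑ᶠ v ∈ A, (G.neighborSet v).ncard

/-- growth function -/
noncomputable def Vfun (G : SimpleGraph V) (x : V) (r : ℕ) : ℕ :=
  volOf G {y | G.dist x y ≤ r}


lemma ncard_biUnion_of_ncard_eq {α β : Type*} {s : Set α} (hs : s.Finite) (f : α → Set β) (k : ℕ)
    (hfin : ∀ a ∈ s, (f a).Finite) (hk : ∀ a ∈ s, (f a).ncard = k)
    (hdisj : ∀ a ∈ s, ∀ b ∈ s, a ≠ b → Disjoint (f a) (f b)) :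
    (⋃ a ∈ s, f a).ncard = s.ncard * k := by
  refine Set.Finite.induction_on_subset (motive := fun t _ => (⋃ a ∈ t, f a).ncard = t.ncard * k) s hs
    (by simp) ?_
  intro a t haS htS hat ih
  have htfin : t.Finite := hs.subset htS
  have hUfin : (⋃ b ∈ t, f b).Finite := htfin.biUnion (fun b hb => hfin b (htS hb))
  have hdisj' : Disjoint (f a) (⋃ b ∈ t, f b) := by
    refine Set.disjoint_left.2 ?_
    rintro x hxa hx
    simp only [Set.mem_iUnion] at hx
    obtain ⟨b, hb, hxb⟩ := hx
    exact (Set.disjoint_left.1 (hdisj a haS b (htS hb) (fun h => hat (h ▸ hb))) hxa) hxb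
  rw [Set.biUnion_insert, Set.ncard_union_eq hdisj' (hfin a haS) hUfin, ih,
    Set.ncard_insert_of_notMem hat htfin, hk a haS]
  ring

lemma vBoundary_subset_F (G : SimpleGraph V) {F C : Set V} (hC : IsCellOf G F C) :
    vBoundary G C ⊆ F := by
  rintro u ⟨huC, c, hcC, hadj⟩
  by_contra huF
  have hsub : C ⊆ insert u C := Set.subset_insert _ _
  have hDF : insert u C ⊆ Fᶜ := by rw [Set.insert_subset_iff]; exact ⟨huF, hC.2.1⟩
  have hpre : (G.induce (insert u C)).Preconnected := by
    have key : ∀ x : (insert u C : Set V),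
        (G.induce (insert u C)).Reachable x ⟨c, Set.mem_insert_of_mem _ hcC⟩ := by
      rintro ⟨x, hx⟩
      rcases Set.mem_insert_iff.1 hx with rfl | hx'
      · exact SimpleGraph.Adj.reachable (by simpa using hadj)
      · have h := hC.2.2.1 ⟨x, hx'⟩ ⟨c, hcC⟩
        exact h.map (G.induceHomOfLE hsub).toHom
    intro a b
    exact (key a).trans (key b).symm
  have heq := hC.2.2.2 _ hsub hDF hpre
  exact huC (heq ▸ Set.mem_insert u C)

lemma sSup_image_mul {A : Set ℕ} (hA : A.Nonempty) {k : ℕ} (hk : 0 < k) :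
    sSup ((· * k) '' A) = sSup A * k := by
  by_cases hb : BddAbove A
  · have hub : ∀ m ∈ (· * k) '' A, m ≤ sSup A * k := by
      rintro m ⟨a, ha, rfl⟩
      exact Nat.mul_le_mul_right k (le_csSup hb ha)
    refine le_antisymm (csSup_le (hA.image _) hub) ?_
    exact le_csSup ⟨sSup A * k, hub⟩ ⟨_, Nat.sSup_mem hA hb, rfl⟩
  · have hinf : A.Infinite := fun hfin => hb hfin.bddAbove
    have himg : ((· * k) '' A).Infinite :=
      hinf.image (fun a _ b _ h => Nat.eq_of_mul_eq_mul_right hk h)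
    rw [Set.Infinite.Nat.sSup_eq_zero hinf, Set.Infinite.Nat.sSup_eq_zero himg, Nat.zero_mul]

/-- For a vertex `v ∈ F`, the number of cells containing `v` in their boundary
times `θ_X − 1` equals the degree of `v` in the reduced graph `X_F`;
consequently `c_X·(θ_X − 1) = M_X`. -/
theorem cells_mul_eq_reduced_degree
    {V : Type*} [Infinite V] (G : SimpleGraph V) (hconn : G.Connected)
    (F : Set V) (ψ : G ≃g reducedGraph G F)
    (hF1 : AxiomF1 G F) (hF2 : AxiomF2 G F) (hH1 : AxiomH1 G F)
    (ν : ℕ) (hν : 2 ≤ ν) (hH2 : AxiomH2 G F ν)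
    (θX : ℕ) (hθ : 2 ≤ θX)
    (hθX : ∀ C : Set V, IsCellOf G F C → (vBoundary G C).ncard = θX) :
    (∀ v : F,
      {C : Set V | IsCellOf G F C ∧ (v : V) ∈ vBoundary G C}.ncard * (θX - 1)
        = ((reducedGraph G F).neighborSet v).ncard)
    ∧ sSup {m : ℕ | ∃ v : F,
          m = {C : Set V | IsCellOf G F C ∧ (v : V) ∈ vBoundary G C}.ncard} * (θX - 1)
        = sSup {m : ℕ | ∃ v : V, m = (G.neighborSet v).ncard} := by
  classical
  have hk : 0 < θX - 1 := by omega
  have hbdfin : ∀ C : Set V, IsCellOf G F C → (vBoundary G C).Finite := by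
    intro C hC
    by_contra h
    have h0 : (vBoundary G C).ncard = 0 := Set.Infinite.ncard h
    rw [hθX C hC] at h0; omega
  have part1 : ∀ v : F,
      {C : Set V | IsCellOf G F C ∧ (v : V) ∈ vBoundary G C}.ncard * (θX - 1)
        = ((reducedGraph G F).neighborSet v).ncard := by
    intro v
    set 𝒞 := {C : Set V | IsCellOf G F C ∧ (v : V) ∈ vBoundary G C} with h𝒞
    set S : Set V → Set F := fun C => {w : F | (w : V) ∈ vBoundary G C ∧ w ≠ v} with hSdef
    have hunion : (reducedGraph G F).neighborSet v = ⋃ C ∈ 𝒞, S C := by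
      ext w
      constructor
      · rintro ⟨hne, C, hC, hv, hw⟩
        exact Set.mem_biUnion (⟨hC, hv⟩ : C ∈ 𝒞) ⟨hw, Ne.symm hne⟩
      · intro hw
        simp only [Set.mem_iUnion] at hw
        obtain ⟨C, ⟨hC, hv⟩, hwb, hwv⟩ := hw
        exact ⟨Ne.symm hwv, C, hC, hv, hwb⟩
    have himg : ∀ C ∈ 𝒞, Subtype.val '' S C = vBoundary G C \ {(v : V)} := by
      intro C hC
      ext u
      constructor
      · rintro ⟨w, ⟨hwb, hwv⟩, rfl⟩
        exact ⟨hwb, fun h => hwv (Subtype.ext h)⟩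
      · rintro ⟨hub, huv⟩
        exact ⟨⟨u, vBoundary_subset_F G hC.1 hub⟩, ⟨hub, fun h => huv (congrArg Subtype.val h)⟩,
          rfl⟩
    have hScard : ∀ C ∈ 𝒞, (S C).ncard = θX - 1 := by
      intro C hC
      rw [← Set.ncard_image_of_injective (S C) Subtype.val_injective, himg C hC,
        Set.ncard_diff_singleton_of_mem hC.2, hθX C hC.1]
    have hSfin : ∀ C ∈ 𝒞, (S C).Finite := by
      intro C hC
      exact Set.Finite.of_finite_image (by rw [himg C hC]; exact (hbdfin C hC.1).diff)
        Subtype.val_injective.injOn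
    have hSdisj : ∀ a ∈ 𝒞, ∀ b ∈ 𝒞, a ≠ b → Disjoint (S a) (S b) := by
      intro a ha b hb hab
      rw [Set.disjoint_left]
      rintro w ⟨hwa, hwv⟩ ⟨hwb, -⟩
      have hsub := hF2 a b ha.1 hb.1 hab
      exact hwv (Subtype.ext (hsub ⟨Or.inr hwa, Or.inr hwb⟩ ⟨Or.inr ha.2, Or.inr hb.2⟩))
    by_cases hfin : 𝒞.Finite
    · rw [hunion, ncard_biUnion_of_ncard_eq hfin S (θX - 1) hSfin hScard hSdisj]
    · have hg : ∀ C ∈ 𝒞, ∃ w : F, w ∈ S C := by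
        intro C hC
        exact Set.nonempty_of_ncard_ne_zero (by rw [hScard C hC]; omega)
      set g : Set V → F := fun C => if h : ∃ w : F, w ∈ S C then h.choose else v with hgdef
      have hgmem : ∀ C ∈ 𝒞, g C ∈ S C := by
        intro C hC
        simp only [hgdef, dif_pos (hg C hC)]
        exact (hg C hC).choose_spec
      have hginj : Set.InjOn g 𝒞 := by
        intro a ha b hb hab
        by_contra hne
        exact (Set.disjoint_left.1 (hSdisj a ha b hb hne) (hgmem a ha)) (hab ▸ hgmem b hb)
      have hNinf : ((reducedGraph G F).neighborSet v).Infinite := by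
        intro hNfin
        apply hfin
        refine Set.Finite.of_finite_image (hNfin.subset ?_) hginj
        rintro w ⟨C, hC, rfl⟩
        rw [hunion]
        exact Set.mem_biUnion hC (hgmem C hC)
      rw [Set.Infinite.ncard hNinf, Set.Infinite.ncard hfin, Nat.zero_mul]
  refine ⟨part1, ?_⟩
  have hdeg : ∀ u : V, (G.neighborSet u).ncard
      = ((reducedGraph G F).neighborSet (ψ u)).ncard := by
    intro u
    have himg : (fun x => ψ x) '' G.neighborSet u = (reducedGraph G F).neighborSet (ψ u) := by
      ext w
      constructor
      · rintro ⟨x, hx, rfl⟩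
        exact ψ.map_adj_iff.2 hx
      · intro hw
        refine ⟨ψ.symm w, ?_, by simp⟩
        have h2 : (reducedGraph G F).Adj (ψ u) (ψ (ψ.symm w)) := by simpa using hw
        exact ψ.map_adj_iff.1 h2
    rw [← himg, Set.ncard_image_of_injective _ (fun a b h => ψ.injective h)]
  have hDeq : {m : ℕ | ∃ v : V, m = (G.neighborSet v).ncard}
      = {m : ℕ | ∃ w : F, m = ((reducedGraph G F).neighborSet w).ncard} := by
    ext m
    constructor
    · rintro ⟨u, rfl⟩
      exact ⟨ψ u, hdeg u⟩
    · rintro ⟨w, rfl⟩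
      exact ⟨ψ.symm w, by rw [hdeg (ψ.symm w)]; simp⟩
  have hA : {m : ℕ | ∃ w : F, m = ((reducedGraph G F).neighborSet w).ncard}
      = (· * (θX - 1)) ''
        {m : ℕ | ∃ v : F, m = {C : Set V | IsCellOf G F C ∧ (v : V) ∈ vBoundary G C}.ncard} := by
    ext m
    constructor
    · rintro ⟨w, rfl⟩
      exact ⟨_, ⟨w, rfl⟩, part1 w⟩
    · rintro ⟨a, ⟨w, rfl⟩, rfl⟩
      exact ⟨w, by simpa using part1 w⟩
  have hAne : {m : ℕ | ∃ v : F,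
      m = {C : Set V | IsCellOf G F C ∧ (v : V) ∈ vBoundary G C}.ncard}.Nonempty :=
    ⟨_, ⟨ψ (Classical.arbitrary V), rfl⟩⟩
  rw [hDeq, hA, sSup_image_mul hAne hk]
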